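/- arXiv:1907.08811 — 4 statements merged into one kernel-verified Lean document; each statement's English description precedes it below -/
import Mathlib

section
/- Let A⁽¹⁾, …, A⁽ᴺ⁾ be invertible real square matrices with ∏_{i=1}^N σ_min(A⁽ⁱ⁾) > 1, and let 𝒜 = I − A⁽ᴺ⁾ ⊗ ⋯ ⊗ A⁽²⁾ ⊗ A⁽¹⁾. Then 𝒜 is invertible and cond(𝒜) ≤ (∏ᵢ σ_min(A⁽ⁱ⁾) / (∏ᵢ σ_min(A⁽ⁱ⁾) − 1)) · (1 + ∏ᵢ ‖A⁽ⁱ⁾‖₂). -/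
open Matrix

/-- The spectral norm (largest singular value) of a real matrix, as the operator
norm of the induced map between Euclidean spaces. -/
noncomputable def specNorm {m n : Type*} [Fintype m] [Fintype n] [DecidableEq n]
    (M : Matrix m n ℝ) : ℝ :=
  ‖LinearMap.toContinuousLinearMap (Matrix.toEuclideanLin M)‖

/-- The smallest singular value of a real matrix: the infimum of `‖Mx‖` over
unit vectors `x`. -/
noncomputable def sigmaMin {m n : Type*} [Fintype m] [Fintype n] [DecidableEq n]
    (M : Matrix m n ℝ) : ℝ :=
  sInf ((fun x => ‖Matrix.toEuclideanLin M x‖) '' Metric.sphere 0 1)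

/-- The Kronecker product of a finite family of square matrices, realized on the
dependent-product index type. -/
noncomputable def kronFamily {N : ℕ} {n : Fin N → Type*} [∀ i, Fintype (n i)]
    (A : ∀ i, Matrix (n i) (n i) ℝ) : Matrix (∀ i, n i) (∀ i, n i) ℝ :=
  fun a b => ∏ i, A i (a i) (b i)

universe u

section helpers
variable {m n : Type*} [Fintype m] [Fintype n] [DecidableEq n]

lemma specNorm_nonneg (M : Matrix m n ℝ) : 0 ≤ specNorm M := norm_nonneg _

lemma sigmaMin_nonneg (M : Matrix m n ℝ) : 0 ≤ sigmaMin M :=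
  Real.sInf_nonneg (by rintro x ⟨y, -, rfl⟩; exact norm_nonneg _)

lemma norm_toEuclideanLin_le (M : Matrix m n ℝ) (x : EuclideanSpace ℝ n) :
    ‖Matrix.toEuclideanLin M x‖ ≤ specNorm M * ‖x‖ :=
  (LinearMap.toContinuousLinearMap (Matrix.toEuclideanLin M)).le_opNorm x

lemma sigmaMin_mul_norm_le (M : Matrix m n ℝ) (x : EuclideanSpace ℝ n) :
    sigmaMin M * ‖x‖ ≤ ‖Matrix.toEuclideanLin M x‖ := by
  rcases eq_or_ne x 0 with rfl | hx
  · simp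
  · have hnx : (0:ℝ) < ‖x‖ := norm_pos_iff.mpr hx
    set u : EuclideanSpace ℝ n := ‖x‖⁻¹ • x with hu
    have hu1 : u ∈ Metric.sphere (0 : EuclideanSpace ℝ n) 1 := by
      simp only [mem_sphere_zero_iff_norm, hu, norm_smul, Real.norm_eq_abs,
        abs_of_pos (inv_pos.mpr hnx)]
      exact inv_mul_cancel₀ hnx.ne'
    have hbdd : BddBelow ((fun x => ‖Matrix.toEuclideanLin M x‖) '' Metric.sphere 0 1) :=
      ⟨0, by rintro r ⟨y, -, rfl⟩; exact norm_nonneg _⟩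
    have h1 : sigmaMin M ≤ ‖Matrix.toEuclideanLin M u‖ := csInf_le hbdd ⟨u, hu1, rfl⟩
    have h2 : ‖Matrix.toEuclideanLin M u‖ = ‖x‖⁻¹ * ‖Matrix.toEuclideanLin M x‖ := by
      rw [hu, _root_.map_smul, norm_smul, Real.norm_eq_abs, abs_of_pos (inv_pos.mpr hnx)]
    rw [h2] at h1
    have := mul_le_mul_of_nonneg_right h1 hnx.le
    calc sigmaMin M * ‖x‖ ≤ ‖x‖⁻¹ * ‖Matrix.toEuclideanLin M x‖ * ‖x‖ := this
      _ = ‖Matrix.toEuclideanLin M x‖ := by field_simp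

lemma euclid_norm_symm {k : Type*} [Fintype k] (w : k → ℝ) :
    ‖(WithLp.equiv 2 (k → ℝ)).symm w‖ = Real.sqrt (∑ a, (w a)^2) := by
  rw [EuclideanSpace.norm_eq]
  congr 1
  refine Finset.sum_congr rfl fun a _ => ?_
  rw [WithLp.equiv_symm_apply, WithLp.ofLp_toLp, Real.norm_eq_abs, sq_abs]

lemma toEuclideanLin_apply_piLp_equiv_symm (M : Matrix m n ℝ) (v : n → ℝ) :
    Matrix.toEuclideanLin M ((WithLp.equiv 2 (n → ℝ)).symm v) =
      (WithLp.equiv 2 (m → ℝ)).symm (M *ᵥ v) := rfl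

lemma sum_sq_mulVec_le (M : Matrix m n ℝ) (v : n → ℝ) :
    ∑ a, (M.mulVec v a)^2 ≤ specNorm M ^ 2 * ∑ b, (v b)^2 := by
  have h := norm_toEuclideanLin_le M ((WithLp.equiv 2 (n → ℝ)).symm v)
  rw [toEuclideanLin_apply_piLp_equiv_symm, euclid_norm_symm, euclid_norm_symm] at h
  have h2 := pow_le_pow_left₀ (Real.sqrt_nonneg _) h 2
  rwa [Real.sq_sqrt (Finset.sum_nonneg fun a _ => sq_nonneg _), mul_pow,
    Real.sq_sqrt (Finset.sum_nonneg fun a _ => sq_nonneg _)] at h2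

lemma le_sum_sq_mulVec (M : Matrix m n ℝ) (v : n → ℝ) :
    sigmaMin M ^ 2 * ∑ b, (v b)^2 ≤ ∑ a, (M.mulVec v a)^2 := by
  have h := sigmaMin_mul_norm_le M ((WithLp.equiv 2 (n → ℝ)).symm v)
  rw [toEuclideanLin_apply_piLp_equiv_symm, euclid_norm_symm, euclid_norm_symm] at h
  have h2 := pow_le_pow_left₀ (mul_nonneg (sigmaMin_nonneg M) (Real.sqrt_nonneg _)) h 2
  rwa [Real.sq_sqrt (Finset.sum_nonneg fun a _ => sq_nonneg _), mul_pow,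
    Real.sq_sqrt (Finset.sum_nonneg fun a _ => sq_nonneg _)] at h2

end helpers



lemma pi_sum_succ {N : ℕ} {n : Fin (N + 1) → Type u} [∀ i, Fintype (n i)]
    (f : (∀ i, n i) → ℝ) :
    ∑ a, f a = ∑ a₀ : n 0, ∑ a' : (∀ i : Fin N, n i.succ), f (Fin.cons a₀ a') := by
  rw [← (Fin.consEquiv n).sum_comp f, Fintype.sum_prod_type]
  rfl

lemma kron_mulVec_cons {N : ℕ} {n : Fin (N + 1) → Type u} [∀ i, Fintype (n i)]
    (A : ∀ i, Matrix (n i) (n i) ℝ) (x : (∀ i, n i) → ℝ)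
    (a₀ : n 0) (a' : ∀ i : Fin N, n i.succ) :
    (kronFamily A).mulVec x (Fin.cons a₀ a') =
      (A 0).mulVec (fun b₀ =>
        (kronFamily (fun i : Fin N => A i.succ)).mulVec
          (fun b' => x (Fin.cons b₀ b')) a') a₀ := by
  simp only [Matrix.mulVec, dotProduct, kronFamily]
  rw [pi_sum_succ (fun b => (∏ i, A i (Fin.cons a₀ a' i) (b i)) * x b)]
  simp only [Fin.prod_univ_succ, Fin.cons_zero, Fin.cons_succ, Finset.mul_sum]
  refine Finset.sum_congr rfl fun b₀ _ => Finset.sum_congr rfl fun b' _ => by ring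

lemma kron_bounds {N : ℕ} : ∀ {n : Fin N → Type u} [∀ i, Fintype (n i)]
    [∀ i, DecidableEq (n i)]
    (A : ∀ i, Matrix (n i) (n i) ℝ) (s t : Fin N → ℝ)
    (_hs : ∀ i, 0 ≤ s i) (_ht : ∀ i, 0 ≤ t i)
    (_hl : ∀ i (v : n i → ℝ), s i ^ 2 * ∑ b, (v b)^2 ≤ ∑ a, ((A i).mulVec v a)^2)
    (_hu : ∀ i (v : n i → ℝ), ∑ a, ((A i).mulVec v a)^2 ≤ t i ^ 2 * ∑ b, (v b)^2)
    (x : (∀ i, n i) → ℝ),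
    (∏ i, s i)^2 * ∑ a, (x a)^2 ≤ ∑ a, ((kronFamily A).mulVec x a)^2 ∧
    ∑ a, ((kronFamily A).mulVec x a)^2 ≤ (∏ i, t i)^2 * ∑ a, (x a)^2 := by
  induction N with
  | zero =>
    intro n _ _ A s t hs ht hl hu x
    have hk : kronFamily A = 1 := by
      funext a b
      have hab : a = b := Subsingleton.elim a b
      subst hab
      simp [kronFamily, Matrix.one_apply]
    rw [hk, Matrix.one_mulVec]
    simp
  | succ N IH =>
    intro n _ _ A s t hs ht hl hu x
    set A' : ∀ i : Fin N, Matrix (n i.succ) (n i.succ) ℝ := fun i => A i.succ with hA'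
    -- per-slice IH
    have IHb := fun b₀ : n 0 => IH A' (fun i => s i.succ) (fun i => t i.succ)
      (fun i => hs i.succ) (fun i => ht i.succ) (fun i => hl i.succ) (fun i => hu i.succ)
      (fun b' => x (Fin.cons b₀ b'))
    set y : n 0 → (∀ i : Fin N, n i.succ) → ℝ :=
      fun b₀ => (kronFamily A').mulVec (fun b' => x (Fin.cons b₀ b')) with hy
    set Y : ℝ := ∑ b₀ : n 0, ∑ a', (y b₀ a')^2 with hY
    have hSx : ∑ a, (x a)^2 = ∑ b₀ : n 0, ∑ b', (x (Fin.cons b₀ b'))^2 :=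
      pi_sum_succ _
    have hYlow : (∏ i : Fin N, s i.succ)^2 * ∑ a, (x a)^2 ≤ Y := by
      rw [hSx, hY, Finset.mul_sum]
      exact Finset.sum_le_sum fun b₀ _ => (IHb b₀).1
    have hYup : Y ≤ (∏ i : Fin N, t i.succ)^2 * ∑ a, (x a)^2 := by
      rw [hSx, hY, Finset.mul_sum]
      exact Finset.sum_le_sum fun b₀ _ => (IHb b₀).2
    have hz : ∑ a, ((kronFamily A).mulVec x a)^2 =
        ∑ a' : (∀ i : Fin N, n i.succ), ∑ a₀ : n 0,
          ((A 0).mulVec (fun b₀ => y b₀ a') a₀)^2 := by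
      rw [pi_sum_succ (fun a => ((kronFamily A).mulVec x a)^2), Finset.sum_comm]
      exact Finset.sum_congr rfl fun a' _ => Finset.sum_congr rfl fun a₀ _ => by
        rw [kron_mulVec_cons]
    have hYswap : Y = ∑ a', ∑ b₀ : n 0, (y b₀ a')^2 := Finset.sum_comm
    constructor
    · rw [Fin.prod_univ_succ, mul_pow, mul_assoc, hz]
      calc s 0 ^ 2 * ((∏ i : Fin N, s i.succ)^2 * ∑ a, (x a)^2)
          ≤ s 0 ^ 2 * Y := by
            exact mul_le_mul_of_nonneg_left hYlow (sq_nonneg _)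
        _ = ∑ a', s 0 ^ 2 * ∑ b₀ : n 0, (y b₀ a')^2 := by
            rw [hYswap, Finset.mul_sum]
        _ ≤ ∑ a' : (∀ i : Fin N, n i.succ), ∑ a₀ : n 0,
              ((A 0).mulVec (fun b₀ => y b₀ a') a₀)^2 :=
            Finset.sum_le_sum fun a' _ => hl 0 _
    · rw [Fin.prod_univ_succ, mul_pow, mul_assoc, hz]
      calc ∑ a' : (∀ i : Fin N, n i.succ), ∑ a₀ : n 0,
              ((A 0).mulVec (fun b₀ => y b₀ a') a₀)^2
          ≤ ∑ a', t 0 ^ 2 * ∑ b₀ : n 0, (y b₀ a')^2 :=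
            Finset.sum_le_sum fun a' _ => hu 0 _
        _ = t 0 ^ 2 * Y := by rw [hYswap, Finset.mul_sum]
        _ ≤ t 0 ^ 2 * ((∏ i : Fin N, t i.succ)^2 * ∑ a, (x a)^2) :=
            mul_le_mul_of_nonneg_left hYup (sq_nonneg _)

section main
variable {N : ℕ} {n : Fin N → Type u} [∀ i, Fintype (n i)] [∀ i, DecidableEq (n i)]

lemma sqrt_bound_low {s T U : ℝ} (hs : 0 ≤ s) (h : s^2*T ≤ U) :
    s * Real.sqrt T ≤ Real.sqrt U := by
  have h2 := Real.sqrt_le_sqrt h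
  rwa [Real.sqrt_mul (sq_nonneg s), Real.sqrt_sq hs] at h2

lemma sqrt_bound_up {t T U : ℝ} (ht : 0 ≤ t) (h : U ≤ t^2*T) :
    Real.sqrt U ≤ t * Real.sqrt T := by
  have h2 := Real.sqrt_le_sqrt h
  rwa [Real.sqrt_mul (sq_nonneg t), Real.sqrt_sq ht] at h2

end main

set_option maxHeartbeats 1000000

theorem cond_bound_of_prod_sigmaMin_gt_one {N : ℕ} {n : Fin N → Type*}
    [∀ i, Fintype (n i)] [∀ i, DecidableEq (n i)]
    (A : ∀ i, Matrix (n i) (n i) ℝ) (hA : ∀ i, IsUnit (A i))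
    (h : 1 < ∏ i, sigmaMin (A i)) :
    IsUnit (1 - kronFamily A) ∧
      specNorm (1 - kronFamily A) * specNorm (1 - kronFamily A)⁻¹ ≤
        ((∏ i, sigmaMin (A i)) / ((∏ i, sigmaMin (A i)) - 1)) *
          (1 + ∏ i, specNorm (A i)) := by
  classical
  set K : Matrix (∀ i, n i) (∀ i, n i) ℝ := kronFamily A with hKdef
  set s : ℝ := ∏ i, sigmaMin (A i) with hsdef
  set P : ℝ := ∏ i, specNorm (A i) with hPdef
  have hP0 : 0 ≤ P := Finset.prod_nonneg fun i _ => specNorm_nonneg _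
  have hs1 : (0:ℝ) < s - 1 := by linarith
  have hs0 : (0:ℝ) ≤ s := by linarith
  have hb := kron_bounds A (fun i => sigmaMin (A i)) (fun i => specNorm (A i))
    (fun i => sigmaMin_nonneg _) (fun i => specNorm_nonneg _)
    (fun i v => le_sum_sq_mulVec _ v) (fun i v => sum_sq_mulVec_le _ v)
  -- Euclidean norm versions
  have hKlow : ∀ x : EuclideanSpace ℝ (∀ i, n i),
      s * ‖x‖ ≤ ‖Matrix.toEuclideanLin K x‖ := by
    intro x
    have h1 := (hb ((WithLp.equiv 2 _) x)).1
    have e1 : x = (WithLp.equiv 2 ((∀ i, n i) → ℝ)).symm ((WithLp.equiv 2 _) x) :=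
      (Equiv.symm_apply_apply _ _).symm
    rw [e1, toEuclideanLin_apply_piLp_equiv_symm, euclid_norm_symm, euclid_norm_symm]
    exact sqrt_bound_low hs0 h1
  have hKup : ∀ x : EuclideanSpace ℝ (∀ i, n i),
      ‖Matrix.toEuclideanLin K x‖ ≤ P * ‖x‖ := by
    intro x
    have h1 := (hb ((WithLp.equiv 2 _) x)).2
    have e1 : x = (WithLp.equiv 2 ((∀ i, n i) → ℝ)).symm ((WithLp.equiv 2 _) x) :=
      (Equiv.symm_apply_apply _ _).symm
    rw [e1, toEuclideanLin_apply_piLp_equiv_symm, euclid_norm_symm, euclid_norm_symm]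
    exact sqrt_bound_up hP0 h1
  have hone : ∀ x : EuclideanSpace ℝ (∀ i, n i),
      Matrix.toEuclideanLin (1 : Matrix (∀ i, n i) (∀ i, n i) ℝ) x = x := by
    intro x
    rw [Matrix.toEuclideanLin_apply, Matrix.one_mulVec, WithLp.toLp_ofLp]
  have hsub : ∀ x : EuclideanSpace ℝ (∀ i, n i),
      Matrix.toEuclideanLin (1 - K) x = x - Matrix.toEuclideanLin K x := by
    intro x
    rw [map_sub, LinearMap.sub_apply, hone]
  have hlow1 : ∀ x : EuclideanSpace ℝ (∀ i, n i),
      (s - 1) * ‖x‖ ≤ ‖Matrix.toEuclideanLin (1 - K) x‖ := by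
    intro x
    rw [hsub, norm_sub_rev]
    have h2 : ‖Matrix.toEuclideanLin K x‖ - ‖x‖ ≤ ‖Matrix.toEuclideanLin K x - x‖ :=
      norm_sub_norm_le _ _
    have := hKlow x
    nlinarith [norm_nonneg x]
  -- invertibility
  have hker : ∀ v : (∀ i, n i) → ℝ, (1 - K).mulVec v = 0 → v = 0 := by
    intro v hv
    have h1 := hlow1 ((WithLp.equiv 2 _).symm v)
    rw [toEuclideanLin_apply_piLp_equiv_symm, hv] at h1
    have h0 : ((WithLp.equiv 2 ((∀ i, n i) → ℝ)).symm 0 : EuclideanSpace ℝ (∀ i, n i)) = 0 := rfl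
    rw [h0, norm_zero] at h1
    have h3 : ‖(WithLp.equiv 2 ((∀ i, n i) → ℝ)).symm v‖ = 0 := by
      nlinarith [norm_nonneg ((WithLp.equiv 2 ((∀ i, n i) → ℝ)).symm v)]
    have h4 : (WithLp.equiv 2 ((∀ i, n i) → ℝ)).symm v = 0 :=
      norm_eq_zero.mp h3
    have := congrArg (WithLp.equiv 2 ((∀ i, n i) → ℝ)) h4
    simpa using this
  have hdet : (1 - K).det ≠ 0 := by
    intro h0
    obtain ⟨v, hv, hv0⟩ := Matrix.exists_mulVec_eq_zero_iff.mpr h0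
    exact hv (hker v hv0)
  have hUnit : IsUnit (1 - K) :=
    (Matrix.isUnit_iff_isUnit_det _).mpr (isUnit_iff_ne_zero.mpr hdet)
  refine ⟨hUnit, ?_⟩
  have hmulinv : (1 - K) * (1 - K)⁻¹ = 1 :=
    Matrix.mul_nonsing_inv _ ((Matrix.isUnit_iff_isUnit_det _).mp hUnit)
  have hinvb : ∀ y : EuclideanSpace ℝ (∀ i, n i),
      ‖Matrix.toEuclideanLin (1 - K)⁻¹ y‖ ≤ (s - 1)⁻¹ * ‖y‖ := by
    intro y
    have h1 := hlow1 (Matrix.toEuclideanLin (1 - K)⁻¹ y)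
    have h2 : Matrix.toEuclideanLin (1 - K) (Matrix.toEuclideanLin (1 - K)⁻¹ y) = y := by
      simp only [Matrix.toEuclideanLin_apply, Equiv.apply_symm_apply, Matrix.mulVec_mulVec,
        hmulinv, Matrix.one_mulVec, Equiv.symm_apply_apply]
    rw [h2] at h1
    rw [← mul_le_mul_iff_right₀ hs1]
    calc (s-1) * ‖Matrix.toEuclideanLin (1 - K)⁻¹ y‖ ≤ ‖y‖ := h1
      _ = (s-1) * ((s-1)⁻¹ * ‖y‖) := by field_simp
  have hspecinv : specNorm (1 - K)⁻¹ ≤ (s - 1)⁻¹ := by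
    refine ContinuousLinearMap.opNorm_le_bound _ (inv_nonneg.mpr hs1.le) fun y => ?_
    exact hinvb y
  have hspec1 : specNorm (1 - K) ≤ 1 + P := by
    refine ContinuousLinearMap.opNorm_le_bound _ (by linarith) fun x => ?_
    have h1 : ‖Matrix.toEuclideanLin (1 - K) x‖ ≤ ‖x‖ + ‖Matrix.toEuclideanLin K x‖ := by
      rw [hsub]; exact norm_sub_le _ _
    have := hKup x
    calc ‖(LinearMap.toContinuousLinearMap (Matrix.toEuclideanLin (1 - K))) x‖
        = ‖Matrix.toEuclideanLin (1 - K) x‖ := rfl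
      _ ≤ ‖x‖ + ‖Matrix.toEuclideanLin K x‖ := h1
      _ ≤ ‖x‖ + P * ‖x‖ := by linarith
      _ = (1 + P) * ‖x‖ := by ring
  have hfinal : specNorm (1 - K) * specNorm (1 - K)⁻¹ ≤ (1 + P) * (s - 1)⁻¹ :=
    mul_le_mul hspec1 hspecinv (specNorm_nonneg _) (by linarith)
  refine hfinal.trans ?_
  rw [div_eq_mul_inv]
  have h5 : (1 + P) * (s-1)⁻¹ ≤ (s * (1 + P)) * (s-1)⁻¹ := by
    have h6 : 1 + P ≤ s * (1 + P) := le_mul_of_one_le_left (by linarith) (by linarith)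
    exact mul_le_mul_of_nonneg_right h6 (inv_nonneg.mpr hs1.le)
  calc (1 + P) * (s-1)⁻¹ ≤ (s * (1 + P)) * (s-1)⁻¹ := h5
    _ = s * (s-1)⁻¹ * (1 + P) := by ring
end

section
/- Let 𝒜 = I − A⁽ᴺ⁾ ⊗ ⋯ ⊗ A⁽¹⁾ and suppose for each i, yᵢ is a unit vector with A⁽ⁱ⁾A⁽ⁱ⁾ᵀ yᵢ = σ_max²(A⁽ⁱ⁾) yᵢ. Then λ_max(𝒜𝒜ᵀ) ≥ 1 + ∏_{i=1}^N σ_max²(A⁽ⁱ⁾) − 2 ∏_{i=1}^N yᵢᵀ H(A⁽ⁱ⁾) yᵢ. -/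
open Matrix

/-- Symmetric part of a square matrix. -/
noncomputable def Hpart {m : Type*} (A : Matrix m m ℝ) : Matrix m m ℝ := (1/2 : ℝ) • (A + Aᵀ)

/-- The largest eigenvalue of a (symmetric) matrix, via the Rayleigh-quotient
characterization: the supremum of `x ⬝ᵥ M x` over unit vectors `x`. -/
noncomputable def lamMax {m : Type*} [Fintype m] (M : Matrix m m ℝ) : ℝ :=
  sSup {r | ∃ x : m → ℝ, x ⬝ᵥ x = 1 ∧ r = x ⬝ᵥ M *ᵥ x}

/-- The smallest eigenvalue of a (symmetric) matrix, via the Rayleigh-quotient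
characterization: the infimum of `x ⬝ᵥ M x` over unit vectors `x`. -/
noncomputable def lamMin {m : Type*} [Fintype m] (M : Matrix m m ℝ) : ℝ :=
  sInf {r | ∃ x : m → ℝ, x ⬝ᵥ x = 1 ∧ r = x ⬝ᵥ M *ᵥ x}

lemma sum_prod_pi {N : ℕ} {n : Fin N → Type*} [∀ i, Fintype (n i)] [∀ i, DecidableEq (n i)]
    (f : ∀ i, n i → ℝ) : ∑ a : ∀ i, n i, ∏ i, f i (a i) = ∏ i, ∑ x, f i x := by
  rw [Finset.prod_univ_sum, Fintype.piFinset_univ]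

lemma rayleigh_bddAbove {m : Type*} [Fintype m] (M : Matrix m m ℝ) :
    BddAbove {r | ∃ x : m → ℝ, x ⬝ᵥ x = 1 ∧ r = x ⬝ᵥ M *ᵥ x} := by
  use ∑ i, ∑ j, |M i j|
  rintro r ⟨x, hx, rfl⟩
  have hxb : ∀ i, |x i| ≤ 1 := by
    intro i
    have h1 : x i * x i ≤ 1 := by
      rw [← hx]
      exact Finset.single_le_sum (fun j _ => mul_self_nonneg (x j)) (Finset.mem_univ i)
    nlinarith [abs_nonneg (x i), abs_mul_abs_self (x i)]
  calc x ⬝ᵥ M *ᵥ x = ∑ i, ∑ j, x i * (M i j * x j) := by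
        simp [dotProduct, mulVec, Finset.mul_sum]
    _ ≤ ∑ i, ∑ j, |M i j| := by
        apply Finset.sum_le_sum; intro i _
        apply Finset.sum_le_sum; intro j _
        calc x i * (M i j * x j) ≤ |x i * (M i j * x j)| := le_abs_self _
          _ = |x i| * |M i j| * |x j| := by rw [abs_mul, abs_mul]; ring
          _ ≤ |x i| * |M i j| * 1 :=
              mul_le_mul_of_nonneg_left (hxb j) (mul_nonneg (abs_nonneg _) (abs_nonneg _))
          _ = |x i| * |M i j| := mul_one _
          _ ≤ |M i j| := mul_le_of_le_one_left (abs_nonneg _) (hxb i)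

theorem lamMax_lower_bound {N : ℕ} {n : Fin N → Type*}
    [∀ i, Fintype (n i)] [∀ i, DecidableEq (n i)]
    (A : ∀ i, Matrix (n i) (n i) ℝ) (y : ∀ i, n i → ℝ)
    (hy1 : ∀ i, y i ⬝ᵥ y i = 1)
    (hy2 : ∀ i, (A i * (A i)ᵀ) *ᵥ y i = (specNorm (A i)) ^ 2 • y i) :
    1 + ∏ i, (specNorm (A i)) ^ 2 - 2 * ∏ i, y i ⬝ᵥ (Hpart (A i)) *ᵥ (y i) ≤
      lamMax ((1 - kronFamily A) * (1 - kronFamily A)ᵀ) := by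
  classical
  set Y : (∀ i, n i) → ℝ := fun a => ∏ i, y i (a i) with hYdef
  -- dot product of Kronecker vectors
  have hdot : ∀ (z : ∀ i, n i → ℝ), Y ⬝ᵥ (fun a => ∏ i, z i (a i)) = ∏ i, y i ⬝ᵥ z i := by
    intro z
    simp only [dotProduct, hYdef, ← Finset.prod_mul_distrib]
    exact sum_prod_pi (fun i x => y i x * z i x)
  -- mulVec of a kron family against a kron vector
  have hmul : ∀ (B : ∀ i, Matrix (n i) (n i) ℝ) (z : ∀ i, n i → ℝ),
      (kronFamily B) *ᵥ (fun a => ∏ i, z i (a i)) = fun a => ∏ i, (B i *ᵥ z i) (a i) := by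
    intro B z
    funext a
    simp only [mulVec, dotProduct, kronFamily, ← Finset.prod_mul_distrib]
    exact sum_prod_pi (fun i x => B i (a i) x * z i x)
  have hYY : Y ⬝ᵥ Y = 1 := by
    have := hdot y
    simpa [hYdef, hy1] using this
  -- transpose of kron family
  have hT : (kronFamily A)ᵀ = kronFamily (fun i => (A i)ᵀ) := by
    funext a b; simp [kronFamily, transpose]
  -- symmetric quadratic form equalities
  have hsymm : ∀ i, y i ⬝ᵥ (A i)ᵀ *ᵥ y i = y i ⬝ᵥ A i *ᵥ y i := by
    intro i
    rw [dotProduct_mulVec, vecMul_transpose, dotProduct_comm]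
  have hH : ∀ i, y i ⬝ᵥ (Hpart (A i)) *ᵥ (y i) = y i ⬝ᵥ A i *ᵥ y i := by
    intro i
    simp only [Hpart, smul_mulVec, dotProduct_smul, add_mulVec, dotProduct_add,
      smul_eq_mul, hsymm i]
    ring
  -- the Rayleigh value at Y
  have hK : Y ⬝ᵥ (kronFamily A) *ᵥ Y = ∏ i, y i ⬝ᵥ A i *ᵥ y i := by
    rw [hYdef] at *
    rw [hmul A y, hdot (fun i => A i *ᵥ y i)]
  have hKT : Y ⬝ᵥ (kronFamily A)ᵀ *ᵥ Y = ∏ i, y i ⬝ᵥ A i *ᵥ y i := by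
    rw [hT, hYdef] at *
    rw [hmul (fun i => (A i)ᵀ) y, hdot (fun i => (A i)ᵀ *ᵥ y i)]
    exact Finset.prod_congr rfl (fun i _ => hsymm i)
  have hKK : Y ⬝ᵥ (kronFamily A * (kronFamily A)ᵀ) *ᵥ Y = ∏ i, (specNorm (A i)) ^ 2 := by
    rw [← mulVec_mulVec, hT, hYdef]
    rw [hmul (fun i => (A i)ᵀ) y]
    have : (fun a => ∏ i, ((A i)ᵀ *ᵥ y i) (a i)) = fun a : ∀ i, n i => ∏ i, (fun j => (A j)ᵀ *ᵥ y j) i (a i) := rfl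
    rw [this, hmul A (fun j => (A j)ᵀ *ᵥ y j)]
    have h2 : (fun a : ∀ i, n i => ∏ i, (A i *ᵥ ((A i)ᵀ *ᵥ y i)) (a i))
        = fun a : ∀ i, n i => ∏ i, ((specNorm (A i)) ^ 2 • y i) (a i) := by
      funext a
      refine Finset.prod_congr rfl (fun i _ => ?_)
      rw [mulVec_mulVec, hy2 i]
    rw [h2, hdot (fun i => (specNorm (A i)) ^ 2 • y i)]
    refine Finset.prod_congr rfl (fun i _ => ?_)
    rw [dotProduct_smul, smul_eq_mul, hy1 i, mul_one]
  have hval : Y ⬝ᵥ ((1 - kronFamily A) * (1 - kronFamily A)ᵀ) *ᵥ Y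
      = 1 + ∏ i, (specNorm (A i)) ^ 2 - 2 * ∏ i, y i ⬝ᵥ (Hpart (A i)) *ᵥ (y i) := by
    have hexp : (1 - kronFamily A) * (1 - kronFamily A)ᵀ
        = 1 - kronFamily A - (kronFamily A)ᵀ + kronFamily A * (kronFamily A)ᵀ := by
      rw [transpose_sub, transpose_one]
      noncomm_ring
    rw [hexp]
    rw [add_mulVec, sub_mulVec, sub_mulVec, one_mulVec]
    rw [dotProduct_add, dotProduct_sub, dotProduct_sub]
    rw [hYY, hK, hKT, hKK]
    have : ∏ i, y i ⬝ᵥ (Hpart (A i)) *ᵥ (y i) = ∏ i, y i ⬝ᵥ A i *ᵥ y i :=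
      Finset.prod_congr rfl (fun i _ => hH i)
    rw [this]; ring
  rw [lamMax, ← hval]
  exact le_csSup (rayleigh_bddAbove _) ⟨Y, hYY, rfl⟩
end

section
/- If A⁽¹⁾, …, A⁽ᴺ⁾ are real square matrices each having positive definite symmetric part (i.e., H(A⁽ⁱ⁾) is symmetric positive definite), and 𝒜 = I − A⁽ᴺ⁾ ⊗ ⋯ ⊗ A⁽¹⁾, then λ_min(𝒜𝒜ᵀ) ≤ 1 + ∏_{i=1}^N σ_min²(A⁽ⁱ⁾). -/
open Matrix

section Aux

variable {m : Type*} [Fintype m] [DecidableEq m]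

lemma dot_self_nonneg (v : m → ℝ) : 0 ≤ v ⬝ᵥ v :=
  Finset.sum_nonneg fun i _ => mul_self_nonneg _

lemma dot_bridge (u v : m → ℝ) :
    (inner ℝ ((WithLp.equiv 2 (m → ℝ)).symm u) ((WithLp.equiv 2 (m → ℝ)).symm v) : ℝ) = u ⬝ᵥ v := by
  rw [EuclideanSpace.inner_eq_star_dotProduct]
  simp [dotProduct_comm]

lemma norm_bridge (v : m → ℝ) :
    ‖(WithLp.equiv 2 (m → ℝ)).symm v‖ ^ 2 = v ⬝ᵥ v := by
  rw [← dot_bridge v v, real_inner_self_eq_norm_sq]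

/-- Key per-matrix lemma: there is a unit vector `z` with
`‖Mᵀ z‖ ≤ σ_min(M)` (in fact equality in norm-squared form). -/
lemma exists_unit_singular [Nonempty m] (M : Matrix m m ℝ)
    (hinj : ∀ v : m → ℝ, v ≠ 0 → M *ᵥ v ≠ 0) :
    ∃ z : m → ℝ, z ⬝ᵥ z = 1 ∧ (Mᵀ *ᵥ z) ⬝ᵥ (Mᵀ *ᵥ z) ≤ sigmaMin M ^ 2 := by
  classical
  set E := EuclideanSpace ℝ m
  set f : E → ℝ := fun x => ‖Matrix.toEuclideanLin M x‖ with hf_def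
  have hf : Continuous f := by
    have : Continuous fun x : E => ‖(LinearMap.toContinuousLinearMap (Matrix.toEuclideanLin M)) x‖ :=
      (LinearMap.toContinuousLinearMap (Matrix.toEuclideanLin M)).continuous.norm
    simpa using this
  have hne : (Metric.sphere (0 : E) 1).Nonempty := by
    refine ⟨EuclideanSpace.single (Classical.arbitrary m) (1 : ℝ), ?_⟩
    rw [mem_sphere_zero_iff_norm, EuclideanSpace.norm_single, norm_one]
  obtain ⟨w, hwmem, hmin⟩ := (isCompact_sphere (0 : E) 1).exists_isMinOn hne hf.continuousOn
  have hw1 : ‖w‖ = 1 := by simpa using mem_sphere_zero_iff_norm.mp hwmem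
  set w' : m → ℝ := WithLp.equiv 2 (m → ℝ) w with hw'_def
  have hwe : (WithLp.equiv 2 (m → ℝ)).symm w' = w := by simp [hw'_def]
  have hww : w' ⬝ᵥ w' = 1 := by
    rw [← norm_bridge, hwe, hw1]; norm_num
  have hw0 : w' ≠ 0 := by
    intro h
    rw [h] at hww
    simp at hww
  have hMw0 : M *ᵥ w' ≠ 0 := hinj w' hw0
  have hTEw : Matrix.toEuclideanLin M w = (WithLp.equiv 2 (m → ℝ)).symm (M *ᵥ w') := by
    rw [← hwe, Matrix.toEuclideanLin_apply_piLp_toLp]; rfl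
  set σ : ℝ := f w with hσ_def
  have hσ2 : σ ^ 2 = (M *ᵥ w') ⬝ᵥ (M *ᵥ w') := by
    rw [hσ_def, hf_def]; simp only [hTEw]; exact norm_bridge _
  have hσpos : 0 < σ := by
    rw [hσ_def, hf_def]
    simp only [hTEw]
    rw [norm_pos_iff]
    intro h
    apply hMw0
    have := congrArg (WithLp.equiv 2 (m → ℝ)) h
    simpa using this
  have hsig : sigmaMin M = σ := by
    apply IsLeast.csInf_eq
    constructor
    · exact ⟨w, hwmem, rfl⟩
    · rintro r ⟨y, hy, rfl⟩
      exact hmin hy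
  -- now the eigenvector argument for T = Mᵀ * M
  set T : E →L[ℝ] E := LinearMap.toContinuousLinearMap (Matrix.toEuclideanLin (Mᵀ * M)) with hT_def
  have hTapp : ∀ x : E, T x = (WithLp.equiv 2 (m → ℝ)).symm
      ((Mᵀ * M) *ᵥ (WithLp.equiv 2 (m → ℝ)) x) := by
    intro x
    rw [hT_def]
    exact Matrix.toEuclideanLin_apply _ x
  have hherm : (Mᵀ * M).IsHermitian := by
    simpa using Matrix.isHermitian_conjTranspose_mul_self M
  have hsym : IsSelfAdjoint T := by
    rw [ContinuousLinearMap.isSelfAdjoint_iff_isSymmetric]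
    exact Matrix.isHermitian_iff_isSymmetric.mp hherm
  have hre : ∀ x : E, T.reApplyInnerSelf x =
      (M *ᵥ (WithLp.equiv 2 (m → ℝ)) x) ⬝ᵥ (M *ᵥ (WithLp.equiv 2 (m → ℝ)) x) := by
    intro x
    have hx : (WithLp.equiv 2 (m → ℝ)).symm ((WithLp.equiv 2 (m → ℝ)) x) = x := by simp
    rw [ContinuousLinearMap.reApplyInnerSelf, hTapp x]
    set x' := (WithLp.equiv 2 (m → ℝ)) x with hx'
    calc RCLike.re (inner ℝ ((WithLp.equiv 2 (m → ℝ)).symm ((Mᵀ * M) *ᵥ x')) x : ℝ)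
        = ((Mᵀ * M) *ᵥ x') ⬝ᵥ x' := by
          rw [← hx]; exact dot_bridge _ _
      _ = (M *ᵥ x') ⬝ᵥ (M *ᵥ x') := by
          rw [← Matrix.mulVec_mulVec, Matrix.mulVec_transpose, ← Matrix.dotProduct_mulVec]
  have hfsq : ∀ x : E, f x ^ 2 = (M *ᵥ (WithLp.equiv 2 (m → ℝ)) x) ⬝ᵥ
      (M *ᵥ (WithLp.equiv 2 (m → ℝ)) x) := by
    intro x
    have hx : (WithLp.equiv 2 (m → ℝ)).symm ((WithLp.equiv 2 (m → ℝ)) x) = x := by simp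
    rw [hf_def]
    simp only
    rw [← hx, Matrix.toEuclideanLin_apply_piLp_toLp]
    refine (norm_bridge _).trans ?_
    simp
  have hextr : IsLocalExtrOn T.reApplyInnerSelf (Metric.sphere (0 : E) ‖w‖) w := by
    rw [hw1]
    apply Or.inl
    apply IsMinOn.localize
    intro x hx
    have h1 : f w ≤ f x := hmin hx
    have h2 : f w ^ 2 ≤ f x ^ 2 := by
      apply pow_le_pow_left₀ (norm_nonneg _) h1
    calc T.reApplyInnerSelf w = f w ^ 2 := by rw [hre, ← hfsq]
      _ ≤ f x ^ 2 := h2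
      _ = T.reApplyInnerSelf x := by rw [hre, ← hfsq]
  have heig : T w = (T.rayleighQuotient w : ℝ) • w :=
    hsym.eq_smul_self_of_isLocalExtrOn hextr
  have hray : T.rayleighQuotient w = σ ^ 2 := by
    rw [ContinuousLinearMap.rayleighQuotient, hre, hw1]
    rw [← hfsq]
    simp [hσ_def]
  have heig' : (Mᵀ * M) *ᵥ w' = σ ^ 2 • w' := by
    have := congrArg (WithLp.equiv 2 (m → ℝ)) heig
    rw [hTapp w, hray] at this
    simp [hw'_def] at this; exact this
  refine ⟨σ⁻¹ • (M *ᵥ w'), ?_, ?_⟩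
  · rw [smul_dotProduct, dotProduct_smul, ← hσ2, smul_eq_mul, smul_eq_mul]
    field_simp
  · have hMz : Mᵀ *ᵥ (σ⁻¹ • (M *ᵥ w')) = σ • w' := by
      rw [Matrix.mulVec_smul, Matrix.mulVec_mulVec, heig', smul_smul]
      congr 1
      rw [sq]
      field_simp
    rw [hMz, smul_dotProduct, dotProduct_smul, smul_eq_mul, smul_eq_mul, hww,
      hsig]
    ring_nf
    exact le_refl _

lemma posdef_dot {M : Matrix m m ℝ} (hH : (Hpart M).PosDef) {v : m → ℝ} (hv : v ≠ 0) :
    0 < v ⬝ᵥ (M *ᵥ v) := by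
  have h := hH.dotProduct_mulVec_pos hv
  have hdot : v ⬝ᵥ (Hpart M *ᵥ v) = v ⬝ᵥ (M *ᵥ v) := by
    rw [Hpart, Matrix.smul_mulVec, Matrix.add_mulVec, dotProduct_smul,
      dotProduct_add]
    have : v ⬝ᵥ (Mᵀ *ᵥ v) = v ⬝ᵥ (M *ᵥ v) := by
      rw [Matrix.mulVec_transpose, dotProduct_comm, ← Matrix.dotProduct_mulVec]
    rw [this, smul_eq_mul]
    ring
  rw [← hdot]
  simpa using h

lemma posdef_mulVec_ne {M : Matrix m m ℝ} (hH : (Hpart M).PosDef) {v : m → ℝ} (hv : v ≠ 0) :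
    M *ᵥ v ≠ 0 := by
  intro h
  have := posdef_dot hH hv
  rw [h] at this
  simp at this

end Aux

section Kron

variable {N : ℕ} {n : Fin N → Type*} [∀ i, Fintype (n i)] [∀ i, DecidableEq (n i)]

lemma sum_prod_swap (g : ∀ i, n i → ℝ) :
    ∑ a : (∀ i, n i), ∏ i, g i (a i) = ∏ i, ∑ j, g i j :=
  (Fintype.prod_sum g).symm

lemma kron_mulVec (B : ∀ i, Matrix (n i) (n i) ℝ) (z : ∀ i, n i → ℝ) :
    kronFamily B *ᵥ (fun a => ∏ i, z i (a i)) = fun a => ∏ i, (B i *ᵥ z i) (a i) := by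
  funext a
  simp only [Matrix.mulVec, dotProduct, kronFamily]
  rw [← sum_prod_swap (fun i j => B i (a i) j * z i j)]
  refine Finset.sum_congr rfl fun b _ => ?_
  rw [Finset.prod_mul_distrib]

lemma kron_transpose (B : ∀ i, Matrix (n i) (n i) ℝ) :
    (kronFamily B)ᵀ = kronFamily (fun i => (B i)ᵀ) := by
  funext a b
  rfl

lemma kron_dot (u v : ∀ i, n i → ℝ) :
    (fun a : (∀ i, n i) => ∏ i, u i (a i)) ⬝ᵥ (fun a => ∏ i, v i (a i)) =
      ∏ i, u i ⬝ᵥ v i := by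
  simp only [dotProduct]
  rw [← sum_prod_swap (fun i j => u i j * v i j)]
  refine Finset.sum_congr rfl fun a _ => ?_
  rw [Finset.prod_mul_distrib]

end Kron

lemma quad_form_eq {m : Type*} [Fintype m] (P : Matrix m m ℝ) (y : m → ℝ) :
    y ⬝ᵥ ((P * Pᵀ) *ᵥ y) = (Pᵀ *ᵥ y) ⬝ᵥ (Pᵀ *ᵥ y) := by
  rw [← Matrix.mulVec_mulVec, Matrix.dotProduct_mulVec, Matrix.mulVec_transpose]

theorem lamMin_upper_bound_of_posdef_symm_part {N : ℕ} {n : Fin N → Type*}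
    [∀ i, Fintype (n i)] [∀ i, DecidableEq (n i)]
    (A : ∀ i, Matrix (n i) (n i) ℝ) (hA : ∀ i, (Hpart (A i)).PosDef) :
    lamMin ((1 - kronFamily A) * (1 - kronFamily A)ᵀ) ≤
      1 + ∏ i, (sigmaMin (A i)) ^ 2 := by
  classical
  have hprodnn : 0 ≤ ∏ i, (sigmaMin (A i)) ^ 2 :=
    Finset.prod_nonneg fun i _ => sq_nonneg _
  set K := kronFamily A with hK
  set S := (1 - K) * (1 - K)ᵀ with hS
  have hbdd : ∀ r ∈ {r | ∃ x : (∀ i, n i) → ℝ, x ⬝ᵥ x = 1 ∧ r = x ⬝ᵥ S *ᵥ x}, (0:ℝ) ≤ r := by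
    rintro r ⟨y, _, rfl⟩
    rw [hS, quad_form_eq]
    exact dot_self_nonneg _
  by_cases hcase : ∀ i, Nonempty (n i)
  · haveI := hcase
    have hz : ∀ i, ∃ z : n i → ℝ, z ⬝ᵥ z = 1 ∧
        ((A i)ᵀ *ᵥ z) ⬝ᵥ ((A i)ᵀ *ᵥ z) ≤ sigmaMin (A i) ^ 2 := fun i =>
      exists_unit_singular (A i) (fun v hv => posdef_mulVec_ne (hA i) hv)
    choose z hz1 hz2 using hz
    set x : (∀ i, n i) → ℝ := fun a => ∏ i, z i (a i) with hx
    have hx1 : x ⬝ᵥ x = 1 := by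
      rw [hx, kron_dot]
      simp [hz1]
    have hz0 : ∀ i, z i ≠ 0 := by
      intro i h
      have := hz1 i
      rw [h] at this
      simp at this
    have hKtx : Kᵀ *ᵥ x = fun a => ∏ i, ((A i)ᵀ *ᵥ z i) (a i) := by
      rw [hK, kron_transpose, hx, kron_mulVec]
    have hxKtx : x ⬝ᵥ (Kᵀ *ᵥ x) = ∏ i, z i ⬝ᵥ ((A i)ᵀ *ᵥ z i) := by
      rw [hKtx, hx, kron_dot]
    have hpos : 0 < ∏ i, z i ⬝ᵥ ((A i)ᵀ *ᵥ z i) := by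
      apply Finset.prod_pos
      intro i _
      have : z i ⬝ᵥ ((A i)ᵀ *ᵥ z i) = z i ⬝ᵥ (A i *ᵥ z i) := by
        rw [Matrix.mulVec_transpose, dotProduct_comm, ← Matrix.dotProduct_mulVec]
      rw [this]
      exact posdef_dot (hA i) (hz0 i)
    have hKK : (Kᵀ *ᵥ x) ⬝ᵥ (Kᵀ *ᵥ x) = ∏ i, ((A i)ᵀ *ᵥ z i) ⬝ᵥ ((A i)ᵀ *ᵥ z i) := by
      rw [hKtx, kron_dot]
    have hval : x ⬝ᵥ S *ᵥ x =
        1 - 2 * ∏ i, z i ⬝ᵥ ((A i)ᵀ *ᵥ z i) + ∏ i, ((A i)ᵀ *ᵥ z i) ⬝ᵥ ((A i)ᵀ *ᵥ z i) := by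
      rw [hS, quad_form_eq]
      have hu : (1 - K)ᵀ *ᵥ x = x - Kᵀ *ᵥ x := by
        rw [Matrix.transpose_sub, Matrix.transpose_one, Matrix.sub_mulVec, Matrix.one_mulVec]
      rw [hu]
      rw [sub_dotProduct, dotProduct_sub, dotProduct_sub]
      rw [hx1, hxKtx, hKK]
      have hcomm : (Kᵀ *ᵥ x) ⬝ᵥ x = ∏ i, z i ⬝ᵥ ((A i)ᵀ *ᵥ z i) := by
        rw [dotProduct_comm, hxKtx]
      rw [hcomm]
      ring
    have hmem : x ⬝ᵥ S *ᵥ x ∈ {r | ∃ y : (∀ i, n i) → ℝ, y ⬝ᵥ y = 1 ∧ r = y ⬝ᵥ S *ᵥ y} :=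
      ⟨x, hx1, rfl⟩
    have h1 : lamMin S ≤ x ⬝ᵥ S *ᵥ x := csInf_le ⟨0, hbdd⟩ hmem
    have h2 : x ⬝ᵥ S *ᵥ x ≤ 1 + ∏ i, (sigmaMin (A i)) ^ 2 := by
      rw [hval]
      have h3 : ∏ i, ((A i)ᵀ *ᵥ z i) ⬝ᵥ ((A i)ᵀ *ᵥ z i) ≤ ∏ i, (sigmaMin (A i)) ^ 2 :=
        Finset.prod_le_prod (fun i _ => dot_self_nonneg _) (fun i _ => hz2 i)
      nlinarith [hpos]
    exact h1.trans h2
  · -- degenerate case: the index type is empty, the Rayleigh set is empty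
    push_neg at hcase
    obtain ⟨i0, hi0⟩ := hcase
    haveI : IsEmpty (n i0) := hi0
    haveI : IsEmpty (∀ i, n i) := ⟨fun a => (@IsEmpty.false _ hi0 (a i0))⟩
    have hempty : {r | ∃ x : (∀ i, n i) → ℝ, x ⬝ᵥ x = 1 ∧ r = x ⬝ᵥ S *ᵥ x} = ∅ := by
      ext r
      simp only [Set.mem_setOf_eq, Set.mem_empty_iff_false, iff_false]
      rintro ⟨y, hy, -⟩
      simp [dotProduct] at hy
    rw [lamMin, hempty, Real.sInf_empty]
    linarith
end

section
/- Let Dᵢ be invertible diagonal real matrices with ∏_{i=1}^N ‖Dᵢ‖₂ < 1, and suppose A⁽ⁱ⁾ = SᵢDᵢSᵢ⁻¹ for invertible Sᵢ. Then 𝒜 = I − A⁽ᴺ⁾ ⊗ ⋯ ⊗ A⁽¹⁾ is invertible and ‖𝒜⁻¹‖₂ ≤ (∏_{i=1}^N cond(Sᵢ)) / (1 − ∏_{i=1}^N ‖Dᵢ‖₂). -/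
open Matrix

open scoped Matrix.Norms.L2Operator

set_option linter.unusedSectionVars false

section Aux

variable {m n m' n' : Type*} [Fintype m] [Fintype n] [DecidableEq n]
  [Fintype m'] [Fintype n'] [DecidableEq n']

lemma specNorm_eq (M : Matrix m n ℝ) : specNorm M = ‖M‖ := rfl

lemma eucl_norm_eq {ι : Type*} [Fintype ι] (x : EuclideanSpace ℝ ι) :
    ‖x‖ = Real.sqrt (∑ i, x i ^ 2) := by
  rw [EuclideanSpace.norm_eq]
  congr 1
  exact Finset.sum_congr rfl fun i _ => by rw [Real.norm_eq_abs, sq_abs]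

lemma eucl_norm_le {ι κ : Type*} [Fintype ι] [Fintype κ] (x : EuclideanSpace ℝ ι)
    (y : EuclideanSpace ℝ κ) {C : ℝ} (hC : 0 ≤ C)
    (h : ∑ i, x i ^ 2 ≤ C ^ 2 * ∑ k, y k ^ 2) : ‖x‖ ≤ C * ‖y‖ := by
  rw [eucl_norm_eq, eucl_norm_eq, ← Real.sqrt_sq hC, ← Real.sqrt_mul (sq_nonneg C)]
  exact Real.sqrt_le_sqrt h

lemma toEuclideanLin_coord (M : Matrix m n ℝ) (x : EuclideanSpace ℝ n) (j : m) :
    (toEuclideanLin M x) j = ∑ k, M j k * x k := by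
  rw [Matrix.toEuclideanLin_apply]; rfl

lemma specNorm_le_bound (M : Matrix m n ℝ) {C : ℝ} (hC : 0 ≤ C)
    (h : ∀ x : EuclideanSpace ℝ n, ‖(toEuclideanLin M) x‖ ≤ C * ‖x‖) : ‖M‖ ≤ C := by
  rw [Matrix.l2_opNorm_def]
  exact ContinuousLinearMap.opNorm_le_bound _ hC h

lemma specNorm_apply_le (M : Matrix m n ℝ) (x : EuclideanSpace ℝ n) :
    ‖(toEuclideanLin M) x‖ ≤ ‖M‖ * ‖x‖ :=
  Matrix.l2_opNorm_mulVec M x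

lemma abs_le_specNorm_diagonal (d : n → ℝ) (j : n) : |d j| ≤ ‖diagonal d‖ := by
  have h := specNorm_apply_le (diagonal d) (EuclideanSpace.single j 1)
  rw [EuclideanSpace.norm_single, norm_one, mul_one] at h
  refine le_trans ?_ h
  have hco : (toEuclideanLin (diagonal d) (EuclideanSpace.single j 1)) j = d j := by
    rw [toEuclideanLin_coord]
    simp [diagonal, EuclideanSpace.single_apply]
  calc |d j| = Real.sqrt ((toEuclideanLin (diagonal d) (EuclideanSpace.single j 1)) j ^ 2) := by
        rw [hco, Real.sqrt_sq_eq_abs]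
    _ ≤ ‖toEuclideanLin (diagonal d) (EuclideanSpace.single j 1)‖ := by
        rw [eucl_norm_eq]
        exact Real.sqrt_le_sqrt (Finset.single_le_sum
          (f := fun i => (toEuclideanLin (diagonal d) (EuclideanSpace.single j 1)) i ^ 2)
          (fun i _ => sq_nonneg _) (Finset.mem_univ j))

lemma specNorm_diagonal_le (d : n → ℝ) {C : ℝ} (hC : 0 ≤ C) (h : ∀ j, |d j| ≤ C) :
    ‖diagonal d‖ ≤ C := by
  refine specNorm_le_bound _ hC fun x => eucl_norm_le _ _ hC ?_
  rw [Finset.mul_sum]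
  refine Finset.sum_le_sum fun i _ => ?_
  have hco : (toEuclideanLin (diagonal d) x) i = d i * x i := by
    rw [toEuclideanLin_coord]
    simp [diagonal]
  rw [hco, mul_pow]
  have hsq := sq_le_sq' (neg_le_of_abs_le (h i)) (le_of_abs_le (h i))
  exact mul_le_mul_of_nonneg_right hsq (sq_nonneg _)

lemma eucl_sq_sum_eq {ι : Type*} [Fintype ι] (x : EuclideanSpace ℝ ι) :
    ∑ i, x i ^ 2 = ‖x‖ ^ 2 := by
  rw [eucl_norm_eq, Real.sq_sqrt (Finset.sum_nonneg fun i _ => sq_nonneg _)]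

lemma specNorm_submatrix_le (K : Matrix m' n' ℝ) (e : m ≃ m') (f : n ≃ n') :
    ‖K.submatrix e f‖ ≤ ‖K‖ := by
  refine specNorm_le_bound _ (norm_nonneg K) fun x => ?_
  set y : EuclideanSpace ℝ n' := (WithLp.equiv 2 (n' → ℝ)).symm (fun k' => x (f.symm k')) with hy
  have hyk : ∀ k', y k' = x (f.symm k') := fun k' => rfl
  have hcoord : ∀ j, (toEuclideanLin (K.submatrix e f)) x j = (toEuclideanLin K) y (e j) := by
    intro j
    rw [toEuclideanLin_coord, toEuclideanLin_coord]
    rw [← Equiv.sum_comp f (fun k' => K (e j) k' * y k')]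
    exact Finset.sum_congr rfl fun k _ => by rw [hyk, Equiv.symm_apply_apply, submatrix_apply]
  have hny : ‖y‖ = ‖x‖ := by
    rw [eucl_norm_eq, eucl_norm_eq]
    congr 1
    rw [← Equiv.sum_comp f (fun k' => y k' ^ 2)]
    exact Finset.sum_congr rfl fun k _ => by rw [hyk, Equiv.symm_apply_apply]
  calc ‖(toEuclideanLin (K.submatrix e f)) x‖
      = ‖(toEuclideanLin K) y‖ := by
        rw [eucl_norm_eq, eucl_norm_eq]
        congr 1
        rw [← Equiv.sum_comp e (fun j' => (toEuclideanLin K) y j' ^ 2)]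
        exact Finset.sum_congr rfl fun j _ => by rw [hcoord]
    _ ≤ ‖K‖ * ‖y‖ := specNorm_apply_le K y
    _ = ‖K‖ * ‖x‖ := by rw [hny]

lemma specNorm_kron_id_le {r : Type*} [Fintype r] [DecidableEq r] [DecidableEq m]
    (A : Matrix m m ℝ) (K : Matrix (m × r) (m × r) ℝ)
    (hK : ∀ p q, K p q = A p.1 q.1 * (if p.2 = q.2 then (1:ℝ) else 0)) :
    ‖K‖ ≤ ‖A‖ := by
  refine specNorm_le_bound _ (norm_nonneg A) fun x => ?_
  set y : r → EuclideanSpace ℝ m := fun s => (WithLp.equiv 2 (m → ℝ)).symm (fun b => x (b, s))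
  have hcoord : ∀ c s, (toEuclideanLin K) x (c, s) = (toEuclideanLin A) (y s) c := by
    intro c s
    rw [toEuclideanLin_coord, toEuclideanLin_coord]
    rw [Fintype.sum_prod_type]
    refine Finset.sum_congr rfl fun b _ => ?_
    rw [show (∑ t, K (c,s) (b,t) * x (b,t)) = ∑ t, (if s = t then A c b * x (b,t) else 0) from
      Finset.sum_congr rfl fun t _ => by rw [hK]; split <;> simp [mul_comm, mul_assoc]]
    rw [Finset.sum_ite_eq]
    simp [y]
  refine eucl_norm_le _ _ (norm_nonneg A) ?_
  calc ∑ p : m × r, (toEuclideanLin K) x p ^ 2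
      = ∑ s, ∑ c, (toEuclideanLin A) (y s) c ^ 2 := by
        rw [Fintype.sum_prod_type, Finset.sum_comm]
        exact Finset.sum_congr rfl fun s _ => Finset.sum_congr rfl fun c _ => by rw [hcoord]
    _ ≤ ∑ s, ‖A‖ ^ 2 * ∑ b, (y s) b ^ 2 := by
        refine Finset.sum_le_sum fun s _ => ?_
        rw [eucl_sq_sum_eq, eucl_sq_sum_eq, ← mul_pow]
        exact pow_le_pow_left₀ (norm_nonneg _) (specNorm_apply_le A (y s)) 2
    _ = ‖A‖ ^ 2 * ∑ p : m × r, x p ^ 2 := by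
        rw [← Finset.mul_sum, Fintype.sum_prod_type, Finset.sum_comm]
        rfl

end Aux

section Kron

variable {N : ℕ} {n : Fin N → Type*} [∀ i, Fintype (n i)] [∀ i, DecidableEq (n i)]

lemma kronFamily_one : kronFamily (fun i => (1 : Matrix (n i) (n i) ℝ)) = 1 := by
  ext a b
  simp only [kronFamily, Matrix.one_apply]
  rw [Finset.prod_boole]
  congr 1
  simp [funext_iff]

lemma kronFamily_mul (A B : ∀ i, Matrix (n i) (n i) ℝ) :
    kronFamily (fun i => A i * B i) = kronFamily A * kronFamily B := by
  ext a b
  simp only [kronFamily, Matrix.mul_apply]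
  rw [Finset.prod_univ_sum, Fintype.piFinset_univ]
  exact Finset.sum_congr rfl fun c _ => Finset.prod_mul_distrib

lemma kronFamily_diagonal (d : ∀ i, n i → ℝ) :
    kronFamily (fun i => diagonal (d i)) = diagonal (fun a => ∏ i, d i (a i)) := by
  ext a b
  simp only [kronFamily]
  by_cases hab : a = b
  · subst hab
    simp [diagonal_apply_eq]
  · obtain ⟨i, hi⟩ : ∃ i, a i ≠ b i := by
      by_contra hc; push_neg at hc; exact hab (funext hc)
    rw [diagonal_apply_ne _ hab]
    exact Finset.prod_eq_zero (Finset.mem_univ i) (diagonal_apply_ne _ hi)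

lemma kronFamily_update_le (M : ∀ i, Matrix (n i) (n i) ℝ) (a : Fin N) :
    ‖kronFamily (Function.update (fun i => (1 : Matrix (n i) (n i) ℝ)) a (M a))‖ ≤ ‖M a‖ := by
  set e := Equiv.piSplitAt a n with he
  set K : Matrix (n a × ∀ j : {j // j ≠ a}, n j) (n a × ∀ j : {j // j ≠ a}, n j) ℝ :=
    fun p q => M a p.1 q.1 * (if p.2 = q.2 then (1:ℝ) else 0) with hKdef
  have hEq : kronFamily (Function.update (fun i => (1 : Matrix (n i) (n i) ℝ)) a (M a))
      = K.submatrix e e := by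
    ext x y
    simp only [kronFamily, submatrix_apply]
    rw [Finset.prod_eq_mul_prod_sdiff_singleton_of_mem (Finset.mem_univ a)]
    rw [Function.update_self]
    have h2 : ∏ j ∈ Finset.univ \ {a},
        (Function.update (fun i => (1 : Matrix (n i) (n i) ℝ)) a (M a) j) (x j) (y j)
        = ∏ j ∈ Finset.univ \ {a}, if x j = y j then (1:ℝ) else 0 := by
      refine Finset.prod_congr rfl fun j hj => ?_
      have hja : j ≠ a := by simpa using (Finset.mem_sdiff.1 hj).2
      rw [Function.update_of_ne hja, Matrix.one_apply]
    rw [h2, Finset.prod_boole]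
    have hiff : (∀ j ∈ Finset.univ \ {a}, x j = y j) ↔ (e x).2 = (e y).2 := by
      constructor
      · intro hc
        funext j
        exact hc j (by simp [j.2])
      · intro hc j hj
        have hja : j ≠ a := by simpa using (Finset.mem_sdiff.1 hj).2
        exact congrFun hc ⟨j, hja⟩
    have h1 : (e x).1 = x a := rfl
    have h1' : (e y).1 = y a := rfl
    rw [hKdef]
    simp only [h1, h1']
    congr 1
    by_cases hc : (e x).2 = (e y).2
    · rw [if_pos hc, if_pos (hiff.2 hc)]
    · rw [if_neg hc, if_neg (fun hh => hc (hiff.1 hh))]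
  rw [hEq]
  exact le_trans (specNorm_submatrix_le K e e) (specNorm_kron_id_le (M a) K fun p q => rfl)

lemma specNorm_kronFamily_le (M : ∀ i, Matrix (n i) (n i) ℝ) :
    ‖kronFamily M‖ ≤ ∏ i, ‖M i‖ := by
  have key : ∀ F : Finset (Fin N),
      ‖kronFamily (fun j => if j ∈ F then M j else 1)‖ ≤ ∏ j ∈ F, ‖M j‖ := by
    intro F
    induction F using Finset.induction with
    | empty =>
        have h1 : ‖(1 : Matrix (∀ i, n i) (∀ i, n i) ℝ)‖ ≤ 1 := by
          rw [Matrix.cstar_norm_def, _root_.map_one]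
          exact ContinuousLinearMap.norm_id_le
        simpa [kronFamily_one] using h1
    | @insert a F hanotin ih =>
        have ha : a ∉ F := hanotin
        have hsplit : (fun j => if j ∈ insert a F then M j else 1)
            = fun j => Function.update (fun i => (1 : Matrix (n i) (n i) ℝ)) a (M a) j *
                (if j ∈ F then M j else 1) := by
          funext j
          by_cases hj : j = a
          · subst hj
            rw [Function.update_self, if_pos (Finset.mem_insert_self j F), if_neg ha, mul_one]
          · rw [Function.update_of_ne hj, one_mul]
            simp [Finset.mem_insert, hj]
        rw [hsplit, kronFamily_mul, Finset.prod_insert ha]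
        exact le_trans (Matrix.l2_opNorm_mul _ _)
          (mul_le_mul (kronFamily_update_le M a) ih (norm_nonneg _) (norm_nonneg _))
  have := key Finset.univ
  simpa using this

end Kron

theorem inv_norm_bound_diagonalizable {N : ℕ} {n : Fin N → Type*}
    [∀ i, Fintype (n i)] [∀ i, DecidableEq (n i)]
    (A S D : ∀ i, Matrix (n i) (n i) ℝ)
    (hS : ∀ i, IsUnit (S i)) (hDdiag : ∀ i, (D i).IsDiag) (hDinv : ∀ i, IsUnit (D i))
    (hA : ∀ i, A i = S i * D i * (S i)⁻¹)
    (h : ∏ i, specNorm (D i) < 1) :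
    IsUnit (1 - kronFamily A) ∧
      specNorm (1 - kronFamily A)⁻¹ ≤
        (∏ i, specNorm (S i) * specNorm (S i)⁻¹) / (1 - ∏ i, specNorm (D i)) := by
  classical
  simp only [specNorm_eq] at h ⊢
  set d : ∀ i, n i → ℝ := fun i => (D i).diag with hd
  have hDdg : ∀ i, D i = diagonal (d i) := fun i => ((hDdiag i).diagonal_diag).symm
  set 𝒮 := kronFamily S with h𝒮
  set 𝒮' := kronFamily (fun i => (S i)⁻¹) with h𝒮'
  have hdetS : ∀ i, IsUnit (S i).det := fun i => (Matrix.isUnit_iff_isUnit_det _).1 (hS i)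
  have h1 : 𝒮 * 𝒮' = 1 := by
    rw [h𝒮, h𝒮', ← kronFamily_mul,
      show (fun i => S i * (S i)⁻¹) = fun i => (1 : Matrix (n i) (n i) ℝ) from
        funext fun i => Matrix.mul_nonsing_inv _ (hdetS i)]
    exact kronFamily_one
  have h2 : 𝒮' * 𝒮 = 1 := by
    rw [h𝒮, h𝒮', ← kronFamily_mul,
      show (fun i => (S i)⁻¹ * S i) = fun i => (1 : Matrix (n i) (n i) ℝ) from
        funext fun i => Matrix.nonsing_inv_mul _ (hdetS i)]
    exact kronFamily_one
  set P : (∀ i, n i) → ℝ := fun a => ∏ i, d i (a i) with hP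
  have hDkron : kronFamily D = diagonal P := by
    rw [show D = fun i => diagonal (d i) from funext hDdg]
    exact kronFamily_diagonal d
  set p := ∏ i, ‖D i‖ with hp
  have hp0 : 0 ≤ p := Finset.prod_nonneg fun i _ => norm_nonneg _
  have hPa : ∀ a, |P a| ≤ p := by
    intro a
    rw [hP, hp]
    calc |∏ i, d i (a i)| = ∏ i, |d i (a i)| := Finset.abs_prod _ _
      _ ≤ ∏ i, ‖D i‖ := Finset.prod_le_prod (fun i _ => abs_nonneg _)
          (fun i _ => by rw [hDdg i]; exact abs_le_specNorm_diagonal _ _)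
  have hpl : 0 < 1 - p := by linarith
  have hone : ∀ a, 0 < 1 - P a := fun a => by
    have := (abs_le.1 (hPa a)).2; linarith
  set v : (∀ i, n i) → ℝ := fun a => 1 - P a with hv
  have hvd : diagonal v = 1 - diagonal P := by
    rw [← Matrix.diagonal_one, ← Matrix.diagonal_sub]
  have hTunit : IsUnit (diagonal v) := by
    rw [Matrix.isUnit_iff_isUnit_det, det_diagonal]
    exact isUnit_iff_ne_zero.2 (Finset.prod_ne_zero_iff.2 fun a _ => ne_of_gt (hone a))
  have hTinv : (diagonal v)⁻¹ = diagonal (fun a => (v a)⁻¹) :=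
    Matrix.inv_eq_right_inv (by
      have hvv : (fun a => v a * (v a)⁻¹) = fun _ => (1:ℝ) :=
        funext fun a => mul_inv_cancel₀ (ne_of_gt (hone a))
      rw [Matrix.diagonal_mul_diagonal, hvv, Matrix.diagonal_one])
  have hnormTinv : ‖(diagonal v)⁻¹‖ ≤ (1 - p)⁻¹ := by
    rw [hTinv]
    refine specNorm_diagonal_le _ (inv_nonneg.2 (le_of_lt hpl)) fun a => ?_
    rw [abs_inv, abs_of_pos (hone a)]
    refine one_div (v a) ▸ one_div (1 - p) ▸ one_div_le_one_div_of_le hpl ?_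
    have := (abs_le.1 (hPa a)).2
    simp only [hv]
    linarith
  have hAeq : kronFamily A = 𝒮 * kronFamily D * 𝒮' := by
    have e0 : kronFamily A = kronFamily (fun i => (S i * D i) * (S i)⁻¹) :=
      congrArg kronFamily (funext hA)
    have e1 : kronFamily (fun i => (S i * D i) * (S i)⁻¹)
        = kronFamily (fun i => S i * D i) * 𝒮' := kronFamily_mul _ _
    have e2 : kronFamily (fun i => S i * D i) = 𝒮 * kronFamily D := kronFamily_mul _ _
    rw [e0, e1, e2]
  have hfinal : (1 : Matrix (∀ i, n i) (∀ i, n i) ℝ) - kronFamily A = 𝒮 * diagonal v * 𝒮' := by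
    rw [hvd, mul_sub, mul_one, sub_mul, h1, hAeq, hDkron]
  have hdet𝒮 : IsUnit 𝒮.det :=
    IsUnit.of_mul_eq_one 𝒮'.det (by rw [← det_mul, h1, det_one])
  have hdet𝒮' : IsUnit 𝒮'.det :=
    IsUnit.of_mul_eq_one 𝒮.det (by rw [← det_mul, h2, det_one])
  have hSu : IsUnit 𝒮 := (Matrix.isUnit_iff_isUnit_det _).2 hdet𝒮
  have hS'u : IsUnit 𝒮' := (Matrix.isUnit_iff_isUnit_det _).2 hdet𝒮'
  have hUnit : IsUnit (1 - kronFamily A) := by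
    rw [hfinal]
    exact (hSu.mul hTunit).mul hS'u
  refine ⟨hUnit, ?_⟩
  have hinv : (1 - kronFamily A)⁻¹ = 𝒮 * (diagonal v)⁻¹ * 𝒮' := by
    rw [hfinal, Matrix.mul_inv_rev, Matrix.mul_inv_rev]
    rw [Matrix.inv_eq_right_inv h2, Matrix.inv_eq_right_inv h1]
    rw [mul_assoc]
  rw [hinv]
  have hSn : ‖𝒮‖ ≤ ∏ i, ‖S i‖ := specNorm_kronFamily_le S
  have hS'n : ‖𝒮'‖ ≤ ∏ i, ‖(S i)⁻¹‖ := specNorm_kronFamily_le _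
  have hprodS0 : 0 ≤ ∏ i, ‖S i‖ := Finset.prod_nonneg fun i _ => norm_nonneg _
  have hprodS'0 : 0 ≤ ∏ i, ‖(S i)⁻¹‖ := Finset.prod_nonneg fun i _ => norm_nonneg _
  calc ‖𝒮 * (diagonal v)⁻¹ * 𝒮'‖
      ≤ ‖𝒮 * (diagonal v)⁻¹‖ * ‖𝒮'‖ := Matrix.l2_opNorm_mul _ _
    _ ≤ ‖𝒮‖ * ‖(diagonal v)⁻¹‖ * ‖𝒮'‖ :=
        mul_le_mul_of_nonneg_right (Matrix.l2_opNorm_mul _ _) (norm_nonneg _)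
    _ ≤ ((∏ i, ‖S i‖) * (1 - p)⁻¹) * (∏ i, ‖(S i)⁻¹‖) := by
        refine mul_le_mul ?_ hS'n (norm_nonneg _)
          (mul_nonneg hprodS0 (inv_nonneg.2 (le_of_lt hpl)))
        exact mul_le_mul hSn hnormTinv (norm_nonneg _) hprodS0
    _ = (∏ i, ‖S i‖ * ‖(S i)⁻¹‖) / (1 - p) := by
        rw [Finset.prod_mul_distrib, div_eq_mul_inv]
        ring
end
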